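/- If the family of finite substructures of an ω-categorical relational structure M has no infinite antichain under embeddings induced by automorphisms of M, then for every finite field GF(q) the permutation module GF(q)M over the group ring GF(q)Aut(M) satisfies the ascending chain condition on submodules. -/

import Mathlib

open FirstOrder Cardinal

/-- Proposition 3.4 of the paper. Let `M` be a countably
infinite `ω`-categorical relational structure (finite substructures of a
relational structure are just finite subsets).  If the family of finite
substructures of `M` has no infinite antichain with respect to embeddings
induced by automorphisms of `M`, then for every finite field `F = GF(q)` the
permutation module `F M` (the `F`-vector space `M →₀ F` with `Aut M` permuting
the basis) satisfies the ascending chain condition on `F Aut(M)`-submodules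
(`Aut M`-invariant `F`-subspaces). -/
theorem stmt9 {L : FirstOrder.Language} {M : Type} [L.Structure M]
    [Countable M] [Infinite M] [DecidableEq M]
    (hcat : Cardinal.aleph0.Categorical (L.completeTheory M))
    {F : Type} [Field F] [Fintype F]
    (hantichain : ¬ ∃ A : ℕ → Finset M, ∀ i j : ℕ, i ≠ j →
      ¬ ∃ g : M ≃[L] M, (A i).image g ⊆ A j)
    (c : ℕ → Submodule F (M →₀ F)) (hmono : Monotone c)
    (hinv : ∀ (n : ℕ) (g : M ≃[L] M), ∀ v ∈ c n, Finsupp.mapDomain g v ∈ c n) :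
    ∃ n : ℕ, ∀ m : ℕ, n ≤ m → c m = c n := by
  classical
  by_contra hcon
  push_neg at hcon
  -- build a strictly increasing chain of submodules
  choose nxt hnxt1 hnxt2 using hcon
  have hnxtlt : ∀ n, n < nxt n := by
    intro n
    rcases lt_or_eq_of_le (hnxt1 n) with h | h
    · exact h
    · exact absurd (congrArg c h.symm) (hnxt2 n)
  set φ : ℕ → ℕ := fun k => Nat.rec 0 (fun _ m => nxt m) k with hφ
  have hφsucc : ∀ k, φ (k + 1) = nxt (φ k) := fun k => rfl
  set d : ℕ → Submodule F (M →₀ F) := fun k => c (φ k) with hd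
  have hdlt : ∀ k, d k < d (k + 1) := by
    intro k
    refine lt_of_le_of_ne (hmono ?_) ?_
    · exact (hnxtlt (φ k)).le
    · exact fun h => hnxt2 (φ k) h.symm
  have hdmono : Monotone d :=
    monotone_nat_of_le_succ fun k => (hdlt k).le
  -- choose elements of minimal support cardinality in the successive differences
  have key : ∀ k, ∃ v : M →₀ F, v ∈ d (k + 1) ∧ v ∉ d k ∧
      ∀ w : M →₀ F, w ∈ d (k + 1) → w ∉ d k → v.support.card ≤ w.support.card := by
    intro k
    obtain ⟨x, hx1, hx2⟩ := SetLike.exists_of_lt (hdlt k)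
    have hex : ∃ n : ℕ, ∃ v : M →₀ F, v ∈ d (k + 1) ∧ v ∉ d k ∧ v.support.card = n :=
      ⟨x.support.card, x, hx1, hx2, rfl⟩
    obtain ⟨v, hv1, hv2, hv3⟩ := Nat.find_spec hex
    refine ⟨v, hv1, hv2, fun w hw1 hw2 => ?_⟩
    rw [hv3]
    exact Nat.find_min' hex ⟨w, hw1, hw2, rfl⟩
  choose v hv1 hv2 hv3 using key
  set A : ℕ → Finset M := fun k => (v k).support with hA
  have hAne : ∀ k, (A k).Nonempty := by
    intro k
    rw [Finset.nonempty_iff_ne_empty]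
    intro h
    apply hv2 k
    have : v k = 0 := by rwa [← Finsupp.support_eq_empty]
    rw [this]; exact (d k).zero_mem
  -- the key step: no automorphism embeds A i into A j for i < j
  have main : ∀ i j : ℕ, i < j → ¬ ∃ g : M ≃[L] M, (A i).image g ⊆ A j := by
    rintro i j hij ⟨g, hg⟩
    have hginj : Function.Injective (g : M → M) := g.injective
    obtain ⟨a, ha⟩ := hAne i
    have hga : (g : M → M) a ∈ A j := hg (Finset.mem_image_of_mem _ ha)
    have hvia : v i a ≠ 0 := Finsupp.mem_support_iff.mp ha
    set lam : F := v j (g a) * (v i a)⁻¹ with hlam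
    have hvij : v i ∈ c (φ j) := hdmono (Nat.succ_le_of_lt hij) (hv1 i)
    have hgv : Finsupp.mapDomain (g : M → M) (v i) ∈ d j := hinv (φ j) g (v i) hvij
    set u : M →₀ F := v j - lam • Finsupp.mapDomain (g : M → M) (v i) with hu
    have hu1 : u ∈ d (j + 1) :=
      Submodule.sub_mem _ (hv1 j) (Submodule.smul_mem _ _ ((hdmono j.le_succ) hgv))
    have hu2 : u ∉ d j := by
      intro h
      apply hv2 j
      have : v j = u + lam • Finsupp.mapDomain (g : M → M) (v i) := by
        rw [hu]; abel
      rw [this]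
      exact Submodule.add_mem _ h (Submodule.smul_mem _ _ hgv)
    have hsupp : u.support ⊆ (A j).erase ((g : M → M) a) := by
      intro x hx
      have hxne : u x ≠ 0 := Finsupp.mem_support_iff.mp hx
      rw [Finset.mem_erase]
      constructor
      · intro hxa
        apply hxne
        rw [hu, hxa]
        simp only [Finsupp.sub_apply, Finsupp.smul_apply]
        rw [Finsupp.mapDomain_apply hginj, hlam]
        field_simp
        rw [smul_eq_mul, div_mul_cancel₀ _ hvia, sub_self]
      · by_contra hxA
        apply hxne
        have hvjx : v j x = 0 := by
          by_contra h
          exact hxA (Finsupp.mem_support_iff.mpr h)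
        have hmapx : Finsupp.mapDomain (g : M → M) (v i) x = 0 := by
          by_contra h
          have : x ∈ (Finsupp.mapDomain (g : M → M) (v i)).support :=
            Finsupp.mem_support_iff.mpr h
          rw [Finsupp.mapDomain_support_of_injective hginj] at this
          exact hxA (hg this)
        rw [hu]
        simp [hvjx, hmapx]
    have hcard := hv3 j u hu1 hu2
    have hlt : u.support.card < (v j).support.card := by
      have h1 := Finset.card_erase_lt_of_mem hga
      have h2 := Finset.card_le_card hsupp
      simp only [hA] at h1 h2
      omega
    exact absurd hcard (not_le.mpr hlt)
  -- extract a subsequence along which the support sizes are nondecreasing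
  have hPWO : (Set.univ : Set ℕ).IsPWO :=
    (Set.isWF_univ_iff.2 ⟨wellFounded_lt⟩).isPWO
  obtain ⟨ψ, hψ⟩ := hPWO.exists_monotone_subseq (f := fun k => (A k).card)
    (fun _ => Set.mem_univ _)
  -- this subsequence is an infinite antichain
  apply hantichain
  refine ⟨fun k => A (ψ k), fun i j hij => ?_⟩
  rcases lt_or_gt_of_ne hij with h | h
  · exact main _ _ (ψ.strictMono h)
  · rintro ⟨g, hg⟩
    have hginj : Function.Injective (g : M → M) := g.injective
    have hcard1 : (A (ψ j)).card ≤ (A (ψ i)).card := hψ h.le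
    have hcard2 : ((A (ψ i)).image g).card = (A (ψ i)).card :=
      Finset.card_image_of_injective _ hginj
    have heq : (A (ψ i)).image g = A (ψ j) :=
      Finset.eq_of_subset_of_card_le hg (by omega)
    refine main _ _ (ψ.strictMono h) ⟨g.symm, ?_⟩
    rw [← heq, Finset.image_image]
    intro x hx
    obtain ⟨y, hy, rfl⟩ := Finset.mem_image.mp hx
    simpa using hy
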